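/- arXiv:2311.03540 — 2 statements merged into one kernel-verified Lean document; each statement's English description precedes it below -/
import Mathlib

section
/- Gaussian-type integral bound used in the Carleman weight computation (inequality (okorok) of the paper, in closed form): for every real A > 0, ∫₀^∞ e^{−x²} · exp( A·(e^{−x²} − 1) ) dx ≤ √π / (2√A). In particular, for every M > 0 the same bound holds for ∫₀^M e^{−x²} exp( A(e^{−x²} − 1) ) dx. -/
open Real Set MeasureTheory

/-- Gaussian-type integral bound used in the Carleman weight computation:
for every `A > 0`,
`∫₀^∞ e^{−x²} · exp(A·(e^{−x²} − 1)) dx ≤ √π / (2√A)`,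
and for every `M > 0` the same bound holds for the integral over `(0, M]`. -/
theorem gaussian_type_integral_bound (A : ℝ) (hA : 0 < A) :
    (∫ x in Set.Ioi (0:ℝ),
        Real.exp (-x ^ 2) * Real.exp (A * (Real.exp (-x ^ 2) - 1))
      ≤ Real.sqrt Real.pi / (2 * Real.sqrt A)) ∧
    ∀ M : ℝ, 0 < M →
      ∫ x in Set.Ioc (0:ℝ) M,
          Real.exp (-x ^ 2) * Real.exp (A * (Real.exp (-x ^ 2) - 1))
        ≤ Real.sqrt Real.pi / (2 * Real.sqrt A) := by
  set f : ℝ → ℝ := fun x => Real.exp (-x ^ 2) * Real.exp (A * (Real.exp (-x ^ 2) - 1)) with hf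
  set g : ℝ → ℝ := fun x => Real.sqrt (1 - Real.exp (-x ^ 2)) with hg
  set d : ℝ → ℝ := fun x => Real.exp (-A * (g x) ^ 2) * (x * Real.exp (-x ^ 2) / g x) with hd
  set F : ℝ → ℝ := fun y => ∫ t in (0:ℝ)..y, Real.exp (-A * t ^ 2) with hF
  have hfcont : Continuous f := by continuity
  have hgcont : Continuous g := by continuity
  -- basic facts
  have hsub : ∀ x : ℝ, 0 ≤ 1 - Real.exp (-x ^ 2) := by
    intro x
    have : Real.exp (-x ^ 2) ≤ 1 := Real.exp_le_one_iff.mpr (by nlinarith [sq_nonneg x])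
    linarith
  have hsubpos : ∀ x : ℝ, 0 < x → 0 < 1 - Real.exp (-x ^ 2) := by
    intro x hx
    have : Real.exp (-x ^ 2) < 1 := Real.exp_lt_one_iff.mpr (by nlinarith [pow_pos hx 2])
    linarith
  have hgsq : ∀ x : ℝ, (g x) ^ 2 = 1 - Real.exp (-x ^ 2) := fun x =>
    Real.sq_sqrt (hsub x)
  have hgpos : ∀ x : ℝ, 0 < x → 0 < g x := fun x hx =>
    Real.sqrt_pos.mpr (hsubpos x hx)
  have hgle : ∀ x : ℝ, 0 < x → g x ≤ x := by
    intro x hx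
    have h1 : 1 - Real.exp (-x ^ 2) ≤ x ^ 2 := by
      have := Real.add_one_le_exp (-x ^ 2)
      linarith
    calc g x ≤ Real.sqrt (x ^ 2) := Real.sqrt_le_sqrt h1
    _ = x := by rw [Real.sqrt_sq hx.le]
  have hglb : ∀ x : ℝ, 0 < x → x * Real.exp (-x ^ 2) ≤ g x := by
    intro x hx
    have h1 : x ^ 2 * Real.exp (-x ^ 2) ^ 2 ≤ 1 - Real.exp (-x ^ 2) := by
      have he : 1 + x ^ 2 ≤ Real.exp (x ^ 2) := by
        have := Real.add_one_le_exp (x ^ 2); linarith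
      have hp : Real.exp (-x ^ 2) = (Real.exp (x ^ 2))⁻¹ := by
        rw [← Real.exp_neg]
      have hx2 : (0:ℝ) < Real.exp (x ^ 2) := Real.exp_pos _
      set E := Real.exp (x ^ 2) with hE
      set u := E⁻¹ with hu
      have hu0 : 0 < u := inv_pos.mpr hx2
      have hEu : E * u = 1 := mul_inv_cancel₀ (ne_of_gt hx2)
      have hsq : 0 ≤ (1 - u) ^ 2 := sq_nonneg _
      have haux : 0 ≤ (E - 1 - x ^ 2) * u ^ 2 := by
        apply mul_nonneg _ (sq_nonneg u)
        nlinarith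
      rw [hp]
      nlinarith [sq_nonneg u, mul_pos hu0 hu0]
    calc x * Real.exp (-x ^ 2) = Real.sqrt ((x * Real.exp (-x ^ 2)) ^ 2) := by
          rw [Real.sqrt_sq (by positivity)]
    _ ≤ g x := by
          apply Real.sqrt_le_sqrt
          calc (x * Real.exp (-x ^ 2)) ^ 2 = x ^ 2 * Real.exp (-x ^ 2) ^ 2 := by ring
          _ ≤ 1 - Real.exp (-x ^ 2) := h1
  -- derivative of g
  have hgderiv : ∀ x : ℝ, 0 < x →
      HasDerivAt g (x * Real.exp (-x ^ 2) / g x) x := by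
    intro x hx
    have h1 : HasDerivAt (fun x : ℝ => 1 - Real.exp (-x ^ 2))
        (2 * x * Real.exp (-x ^ 2)) x := by
      have : HasDerivAt (fun x : ℝ => -x ^ 2) (-(2 * x)) x := by
        simpa using ((hasDerivAt_pow 2 x).fun_neg)
      have := (Real.hasDerivAt_exp (-x ^ 2)).comp x this
      have h2 := this.neg.const_add 1
      exact (h2.congr_deriv (by ring)).congr_of_eventuallyEq
        (Filter.Eventually.of_forall fun y => by simp [sub_eq_add_neg])
    have h2 := (Real.hasDerivAt_sqrt (ne_of_gt (hsubpos x hx))).comp x h1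
    refine (h2.congr_deriv ?_).congr_of_eventuallyEq
      (Filter.Eventually.of_forall fun y => by rw [hg]; rfl)
    rw [hg]
    field_simp
  -- derivative of F
  have hFderiv : ∀ y : ℝ, HasDerivAt F (Real.exp (-A * y ^ 2)) y := by
    intro y
    have hc : Continuous fun t : ℝ => Real.exp (-A * t ^ 2) := by continuity
    exact intervalIntegral.integral_hasDerivAt_right (hc.intervalIntegrable 0 y)
      hc.aestronglyMeasurable.stronglyMeasurableAtFilter hc.continuousAt
  have hFcont : Continuous F := by
    rw [continuous_iff_continuousAt]
    exact fun y => (hFderiv y).continuousAt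
  -- d is bounded by 1 on positive reals
  have hdbound : ∀ x : ℝ, 0 < x → d x ≤ 1 := by
    intro x hx
    have h1 : Real.exp (-A * (g x) ^ 2) ≤ 1 :=
      Real.exp_le_one_iff.mpr (by nlinarith [sq_nonneg (g x), hA])
    have h2 : x * Real.exp (-x ^ 2) / g x ≤ 1 := by
      rw [div_le_one (hgpos x hx)]
      exact hglb x hx
    have h3 : 0 ≤ x * Real.exp (-x ^ 2) / g x := by positivity
    calc d x ≤ 1 * (x * Real.exp (-x ^ 2) / g x) := by
          apply mul_le_mul_of_nonneg_right h1 h3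
    _ ≤ 1 := by simpa using h2
  have hdnonneg : ∀ x : ℝ, 0 < x → 0 ≤ d x := by
    intro x hx
    have := (hgpos x hx)
    rw [hd]
    positivity
  -- f ≤ d on positive reals
  have hfled : ∀ x : ℝ, 0 < x → f x ≤ d x := by
    intro x hx
    have hgx := hgpos x hx
    have hkey : Real.exp (A * (Real.exp (-x ^ 2) - 1)) = Real.exp (-A * (g x) ^ 2) := by
      rw [hgsq x]; congr 1; ring
    show Real.exp (-x ^ 2) * Real.exp (A * (Real.exp (-x ^ 2) - 1))
      ≤ Real.exp (-A * (g x) ^ 2) * (x * Real.exp (-x ^ 2) / g x)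
    rw [hkey, mul_comm (Real.exp (-x ^ 2))]
    apply mul_le_mul_of_nonneg_left _ (Real.exp_pos _).le
    rw [le_div_iff₀ hgx]
    calc Real.exp (-x ^ 2) * g x ≤ Real.exp (-x ^ 2) * x := by
          exact mul_le_mul_of_nonneg_left (hgle x hx) (Real.exp_pos _).le
    _ = x * Real.exp (-x ^ 2) := by ring
  -- d is measurable
  have hdmeas : Measurable d := by
    have h1 : Continuous fun x : ℝ => Real.exp (-A * (g x) ^ 2) :=
      Real.continuous_exp.comp (((continuous_const (y := A)).mul (hgcont.pow 2)).neg.congr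
        (fun x => by simp))
    have h2 : Continuous fun x : ℝ => x * Real.exp (-x ^ 2) :=
      continuous_id.mul (Real.continuous_exp.comp (continuous_pow 2).neg)
    exact h1.measurable.mul (h2.measurable.div hgcont.measurable)
  -- the gaussian bound
  have hgauss : (∫ t in Set.Ioi (0:ℝ), Real.exp (-A * t ^ 2))
      = Real.sqrt Real.pi / (2 * Real.sqrt A) := by
    rw [integral_gaussian_Ioi A, Real.sqrt_div pi_pos.le]
    rw [div_div]
    ring_nf
  have hgaussInt : IntegrableOn (fun t => Real.exp (-A * t ^ 2)) (Set.Ioi (0:ℝ)) :=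
    (integrable_exp_neg_mul_sq hA).integrableOn
  -- F y ≤ bound for all y ≥ 0
  have hFle : ∀ y : ℝ, 0 ≤ y → F y ≤ Real.sqrt Real.pi / (2 * Real.sqrt A) := by
    intro y hy
    rw [hF]
    simp only
    rw [intervalIntegral.integral_of_le hy, ← hgauss]
    apply setIntegral_mono_set hgaussInt
    · filter_upwards with t using (Real.exp_pos _).le
    · filter_upwards with t
      intro ht
      exact ht.1
  -- main key estimate on Ioc 0 M
  have key : ∀ M : ℝ, 0 < M →
      ∫ x in Set.Ioc (0:ℝ) M, f x ≤ Real.sqrt Real.pi / (2 * Real.sqrt A) := by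
    intro M hM
    have hdint : IntegrableOn d (Set.Ioc (0:ℝ) M) := by
      apply Measure.integrableOn_of_bounded (M := 1)
        (ne_of_lt measure_Ioc_lt_top) hdmeas.aestronglyMeasurable
      filter_upwards [ae_restrict_mem measurableSet_Ioc] with x hx
      rw [Real.norm_eq_abs, abs_of_nonneg (hdnonneg x hx.1)]
      exact hdbound x hx.1
    have hfint : IntegrableOn f (Set.Ioc (0:ℝ) M) :=
      hfcont.integrableOn_Ioc
    have step1 : ∫ x in Set.Ioc (0:ℝ) M, f x ≤ ∫ x in Set.Ioc (0:ℝ) M, d x := by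
      apply setIntegral_mono_on hfint hdint measurableSet_Ioc
      exact fun x hx => hfled x hx.1
    have step2 : ∫ x in Set.Ioc (0:ℝ) M, d x = F (g M) := by
      have hftc : ∫ x in (0:ℝ)..M, d x = F (g M) - F (g 0) := by
        apply intervalIntegral.integral_eq_sub_of_hasDeriv_right_of_le hM.le
        · exact (hFcont.comp hgcont).continuousOn
        · intro x hx
          have hcomp : HasDerivAt (F ∘ g)
              (Real.exp (-A * (g x) ^ 2) * (x * Real.exp (-x ^ 2) / g x)) x :=
            (hFderiv (g x)).comp x (hgderiv x hx.1)
          exact hcomp.hasDerivWithinAt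
        · rw [intervalIntegrable_iff_integrableOn_Ioc_of_le hM.le]
          exact hdint
      have hg0 : g 0 = 0 := by simp [hg]
      have hF0 : F 0 = 0 := by simp [hF]
      rw [intervalIntegral.integral_of_le hM.le] at hftc
      rw [hftc, hg0, hF0, sub_zero]
    calc ∫ x in Set.Ioc (0:ℝ) M, f x ≤ ∫ x in Set.Ioc (0:ℝ) M, d x := step1
    _ = F (g M) := step2
    _ ≤ Real.sqrt Real.pi / (2 * Real.sqrt A) := hFle (g M) (Real.sqrt_nonneg _)
  refine ⟨?_, key⟩
  -- integrability of f on Ioi 0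
  have hfint : IntegrableOn f (Set.Ioi (0:ℝ)) := by
    apply Integrable.mono ((integrable_exp_neg_mul_sq one_pos).integrableOn
      (s := Set.Ioi (0:ℝ))) hfcont.aestronglyMeasurable.restrict
    filter_upwards [ae_restrict_mem measurableSet_Ioi] with x hx
    rw [Real.norm_eq_abs, Real.norm_eq_abs, abs_of_nonneg (le_of_lt (mul_pos (Real.exp_pos _) (Real.exp_pos _))),
      abs_of_nonneg (Real.exp_pos _).le]
    have h1 : Real.exp (A * (Real.exp (-x ^ 2) - 1)) ≤ 1 := by
      apply Real.exp_le_one_iff.mpr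
      have : Real.exp (-x ^ 2) ≤ 1 := Real.exp_le_one_iff.mpr (by nlinarith [sq_nonneg x])
      nlinarith
    calc f x ≤ Real.exp (-x ^ 2) * 1 :=
          mul_le_mul_of_nonneg_left h1 (Real.exp_pos _).le
    _ = Real.exp (-1 * x ^ 2) := by ring_nf
  have htend := intervalIntegral_tendsto_integral_Ioi 0 hfint Filter.tendsto_id
  apply le_of_tendsto htend
  filter_upwards [Filter.eventually_gt_atTop 0] with M hM
  simp only [id] at *
  rw [intervalIntegral.integral_of_le hM.le]
  exact key M hM
end

section
/- Fubini–Gaussian reduction of a weighted volume integral to a boundary integral (inequality (okorok1) of the paper, with explicit constant): let O ⊂ ℝ^{n−1} be a bounded measurable set, ε, T, N, K > 0, let ψ̃ : O → ℝ be bounded measurable, let ℓ : (0,T) → (0,∞) be measurable, let S ≥ sup_{x∈cl(O×(0,ε))} |ψ(x)| where ψ(x',x_n) = ψ̃(x') − N x_n² + K, and define φ(t,x) = e^{λψ(x)}/ℓ(t) and α(t,x) = (e^{λψ(x)} − e^{2λS})/ℓ(t). Then for every τ > 0 and λ > 0 and every measurable f : (0,T)×O → ℝ, ∫_{(0,T)×O×(0,ε)}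 τ φ(t,x) |f(t,x')|² e^{2τα(t,x)} dx dt ≤ ( √π / (2√(2N)) ) · λ^{−1/2} · ∫_{(0,T)×O} √(τ φ(t,x',0)) |f(t,x')|² e^{2τα(t,x',0)} dx' dt, whenever the right-hand side is finite. -/
open Set MeasureTheory

noncomputable section

/-- The slab `O × (0,ε) ⊆ ℝⁿ`, with `x = (x', xₙ)`, `x' = x ∘ Fin.castSucc`,
`xₙ = x (Fin.last m)`. -/
def slab {m : ℕ} (O : Set (Fin m → ℝ)) (ε : ℝ) : Set (Fin (m + 1) → ℝ) :=
  {x | (fun i : Fin m => x i.castSucc) ∈ O ∧ x (Fin.last m) ∈ Set.Ioo 0 ε}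

/-- The weight `ψ(x',xₙ) = ψ̃(x') − N xₙ² + K`. -/
def psiWeight {m : ℕ} (ψt : (Fin m → ℝ) → ℝ) (N K : ℝ) (x : Fin (m + 1) → ℝ) : ℝ :=
  ψt (fun i : Fin m => x i.castSucc) - N * (x (Fin.last m)) ^ 2 + K

/-- `φ(t,x) = e^{λψ(x)}/ℓ(t)`. -/
def carlPhi {m : ℕ} (lam : ℝ) (ψ : (Fin m → ℝ) → ℝ) (ℓ : ℝ → ℝ)
    (p : ℝ × (Fin m → ℝ)) : ℝ :=
  Real.exp (lam * ψ p.2) / ℓ p.1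

/-- `α(t,x) = (e^{λψ(x)} − e^{2λS})/ℓ(t)`. -/
def carlAlpha {m : ℕ} (lam S : ℝ) (ψ : (Fin m → ℝ) → ℝ) (ℓ : ℝ → ℝ)
    (p : ℝ × (Fin m → ℝ)) : ℝ :=
  (Real.exp (lam * ψ p.2) - Real.exp (2 * lam * S)) / ℓ p.1

open Real in
lemma core_gauss (A c ε : ℝ) (hA : 0 < A) (hc : 0 < c) (hε : 0 < ε) :
    ∫ s in Ioo (0:ℝ) ε, Real.exp (-(c*s^2)) * Real.exp (A * (Real.exp (-(c*s^2)) - 1))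
      ≤ Real.sqrt Real.pi / (2 * Real.sqrt (A*c)) := by
  set r : ℝ → ℝ := fun s => A * (1 - Real.exp (-(c*s^2))) with hr
  set F : ℝ → ℝ := fun s => Real.sqrt (r s) with hF
  set F' : ℝ → ℝ := fun s => 1/(2 * Real.sqrt (r s)) * (A * (2*c*s*Real.exp (-(c*s^2)))) with hF'
  set g : ℝ → ℝ := fun v => (Real.sqrt (A*c))⁻¹ * Real.exp (-(v^2)) with hg
  have hrpos : ∀ s ∈ Ioo (0:ℝ) ε, 0 < r s := by
    intro s hs
    have hcs : 0 < c * s^2 := by have := hs.1; positivity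
    have h1 : Real.exp (-(c*s^2)) < 1 := by
      rw [Real.exp_lt_one_iff]; linarith
    simp only [hr]
    nlinarith
  have hrderiv : ∀ s : ℝ, HasDerivAt r (A * (2*c*s*Real.exp (-(c*s^2)))) s := by
    intro s
    have h1 : HasDerivAt (fun s : ℝ => c*s^2) (c*(2*s)) s := by
      simpa using ((hasDerivAt_pow 2 s).const_mul c)
    have h2 : HasDerivAt (fun s : ℝ => Real.exp (-(c*s^2))) (Real.exp (-(c*s^2)) * (-(c*(2*s)))) s :=
      (h1.neg).exp
    have h3 := ((h2.const_sub 1).const_mul A)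
    rw [show A * -(Real.exp (-(c * s ^ 2)) * -(c * (2 * s))) = A * (2*c*s*Real.exp (-(c*s^2))) by ring] at h3
    exact h3
  have hFderiv : ∀ s ∈ Ioo (0:ℝ) ε, HasDerivAt F (F' s) s := by
    intro s hs
    exact (Real.hasDerivAt_sqrt (hrpos s hs).ne').comp s (hrderiv s)
  have hinj : InjOn F (Ioo 0 ε) := by
    apply StrictMonoOn.injOn
    intro a ha b hb hab
    have h1 : r a < r b := by
      have h2 : Real.exp (-(c*b^2)) < Real.exp (-(c*a^2)) := by
        apply Real.exp_lt_exp.2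
        have : a^2 < b^2 := by nlinarith [ha.1, hb.1]
        nlinarith
      simp only [hr]
      nlinarith
    exact Real.sqrt_lt_sqrt (hrpos a ha).le h1
  have himg : F '' Ioo 0 ε ⊆ Ioi 0 := by
    rintro - ⟨s, hs, rfl⟩
    exact Real.sqrt_pos.2 (hrpos s hs)
  have hgint : IntegrableOn g (Ioi 0) := by
    have h0 : Integrable (fun v : ℝ => Real.exp (-(v^2))) := by
      have := integrable_exp_neg_mul_sq (one_pos)
      simpa using this
    exact (h0.const_mul _).integrableOn
  have hgnn : ∀ v, 0 ≤ g v := fun v => by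
    have : 0 ≤ (Real.sqrt (A*c))⁻¹ := by positivity
    simp only [hg]
    positivity
  have hchg : ∫ x in F '' Ioo 0 ε, g x = ∫ x in Ioo 0 ε, |F' x| • g (F x) :=
    integral_image_eq_integral_abs_deriv_smul measurableSet_Ioo
      (fun x hx => (hFderiv x hx).hasDerivWithinAt) hinj g
  have hrhsint : IntegrableOn (fun x => |F' x| • g (F x)) (Ioo 0 ε) := by
    rw [← integrableOn_image_iff_integrableOn_abs_deriv_smul measurableSet_Ioo
      (fun x hx => (hFderiv x hx).hasDerivWithinAt) hinj g]
    exact hgint.mono_set himg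
  have hpt : ∀ x ∈ Ioo (0:ℝ) ε,
      Real.exp (-(c*x^2)) * Real.exp (A * (Real.exp (-(c*x^2)) - 1)) ≤ |F' x| • g (F x) := by
    intro x hx
    have hx0 : 0 < x := hx.1
    have hcx : 0 < c * x^2 := by positivity
    have hE1 : Real.exp (-(c*x^2)) < 1 := by rw [Real.exp_lt_one_iff]; linarith
    have hEpos : 0 < Real.exp (-(c*x^2)) := Real.exp_pos _
    have hrx : 0 < r x := hrpos x hx
    have hsr : 0 < Real.sqrt (r x) := Real.sqrt_pos.2 hrx
    have hsac : 0 < Real.sqrt (A*c) := Real.sqrt_pos.2 (by positivity)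
    have hF'pos : 0 < F' x := by
      simp only [hF']
      positivity
    have hFx2 : (F x)^2 = r x := Real.sq_sqrt hrx.le
    have hexpeq : Real.exp (A * (Real.exp (-(c*x^2)) - 1)) = Real.exp (-((F x)^2)) := by
      rw [hFx2]; simp only [hr]; congr 1; ring
    have hsq : Real.sqrt (r x) ≤ Real.sqrt (A*c) * x := by
      have h2 : 1 - Real.exp (-(c*x^2)) ≤ c*x^2 := by
        have := Real.add_one_le_exp (-(c*x^2)); linarith
      have h1 : r x ≤ A * c * x^2 := by
        simp only [hr]; nlinarith
      calc Real.sqrt (r x) ≤ Real.sqrt (A*c*x^2) := Real.sqrt_le_sqrt h1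
        _ = Real.sqrt (A*c) * x := by
            rw [show A*c*x^2 = (A*c)*x^2 by ring,
              Real.sqrt_mul (by positivity) (x^2), Real.sqrt_sq hx0.le]
    have h3 : Real.sqrt (r x) * Real.sqrt (A*c) ≤ A * c * x := by
      calc Real.sqrt (r x) * Real.sqrt (A*c) ≤ (Real.sqrt (A*c) * x) * Real.sqrt (A*c) :=
            mul_le_mul_of_nonneg_right hsq hsac.le
        _ = (Real.sqrt (A*c))^2 * x := by ring
        _ = A * c * x := by rw [Real.sq_sqrt (by positivity : (0:ℝ) ≤ A*c)]
    have target_eq : |F' x| • g (F x)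
        = (A * (2*c*x*Real.exp (-(c*x^2)))) * Real.exp (-((F x)^2))
          / (2 * Real.sqrt (r x) * Real.sqrt (A*c)) := by
      rw [abs_of_pos hF'pos, smul_eq_mul]
      simp only [hF', hg]
      field_simp
    rw [target_eq, hexpeq, le_div_iff₀ (by positivity)]
    have := mul_le_mul_of_nonneg_right h3 (by positivity : 0 ≤ 2 * Real.exp (-(c*x^2)) * Real.exp (-((F x)^2)))
    nlinarith [Real.exp_pos (-((F x)^2))]
  have hlint : IntegrableOn (fun x => Real.exp (-(c*x^2)) * Real.exp (A * (Real.exp (-(c*x^2)) - 1))) (Ioo 0 ε) := by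
    apply IntegrableOn.mono_set (t := Icc 0 ε) _ Ioo_subset_Icc_self
    apply ContinuousOn.integrableOn_Icc
    apply Continuous.continuousOn
    fun_prop
  calc ∫ s in Ioo (0:ℝ) ε, Real.exp (-(c*s^2)) * Real.exp (A * (Real.exp (-(c*s^2)) - 1))
      ≤ ∫ x in Ioo 0 ε, |F' x| • g (F x) :=
        setIntegral_mono_on hlint hrhsint measurableSet_Ioo hpt
    _ = ∫ x in F '' Ioo 0 ε, g x := hchg.symm
    _ ≤ ∫ x in Ioi 0, g x := by
        apply setIntegral_mono_set hgint (Filter.Eventually.of_forall hgnn)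
        exact HasSubset.Subset.eventuallyLE himg
    _ = Real.sqrt Real.pi / (2 * Real.sqrt (A*c)) := by
        simp only [hg]
        rw [MeasureTheory.integral_const_mul]
        have h5 : ∫ v in Ioi (0:ℝ), Real.exp (-(v^2)) = Real.sqrt Real.pi / 2 := by
          have := integral_gaussian_Ioi 1
          simpa using this
        rw [h5]
        ring

lemma inner_bound {m : ℕ} (N K S τ lam ε : ℝ) (hN : 0 < N) (hτ : 0 < τ) (hlam : 0 < lam)
    (hε : 0 < ε) (ψt : (Fin m → ℝ) → ℝ) (ℓ : ℝ → ℝ) (t : ℝ) (hℓt : 0 < ℓ t)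
    (x' : Fin m → ℝ) (Fv : ℝ) :
    ∫ s in Ioo (0:ℝ) ε,
        τ * carlPhi lam (psiWeight ψt N K) ℓ (t, Fin.snoc x' s) * Fv ^ 2 *
          Real.exp (2 * τ * carlAlpha lam S (psiWeight ψt N K) ℓ (t, Fin.snoc x' s))
      ≤ Real.sqrt Real.pi / (2 * Real.sqrt (2 * N)) * (Real.sqrt lam)⁻¹ *
        (Real.sqrt (τ * carlPhi lam (psiWeight ψt N K) ℓ (t, Fin.snoc x' 0)) * Fv ^ 2 *
          Real.exp (2 * τ * carlAlpha lam S (psiWeight ψt N K) ℓ (t, Fin.snoc x' 0))) := by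
  have hsnoc : ∀ s : ℝ, psiWeight ψt N K (Fin.snoc x' s) = ψt x' - N * s^2 + K := by
    intro s
    simp [psiWeight, Fin.snoc_last, Fin.snoc_castSucc]
  set φ₀ : ℝ := Real.exp (lam * (ψt x' + K)) / ℓ t with hφ₀
  have hφ₀pos : 0 < φ₀ := by positivity
  set α₀ : ℝ := (Real.exp (lam * (ψt x' + K)) - Real.exp (2 * lam * S)) / ℓ t with hα₀
  have hphi : ∀ s : ℝ, carlPhi lam (psiWeight ψt N K) ℓ (t, Fin.snoc x' s)
      = φ₀ * Real.exp (-(lam * N * s^2)) := by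
    intro s
    simp only [carlPhi, hsnoc, hφ₀]
    rw [show lam * (ψt x' - N * s^2 + K) = lam * (ψt x' + K) + -(lam * N * s^2) by ring,
      Real.exp_add]
    ring
  have halpha : ∀ s : ℝ, carlAlpha lam S (psiWeight ψt N K) ℓ (t, Fin.snoc x' s)
      = α₀ + φ₀ * (Real.exp (-(lam * N * s^2)) - 1) := by
    intro s
    simp only [carlAlpha, hsnoc, hα₀, hφ₀]
    rw [show lam * (ψt x' - N * s^2 + K) = lam * (ψt x' + K) + -(lam * N * s^2) by ring,
      Real.exp_add]
    field_simp
    ring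
  have hphi0 : carlPhi lam (psiWeight ψt N K) ℓ (t, Fin.snoc x' 0) = φ₀ := by
    rw [hphi 0]; norm_num
  have halpha0 : carlAlpha lam S (psiWeight ψt N K) ℓ (t, Fin.snoc x' 0) = α₀ := by
    rw [halpha 0]; norm_num
  set c : ℝ := lam * N with hc
  set A : ℝ := 2 * τ * φ₀ with hA
  have hcpos : 0 < c := by positivity
  have hApos : 0 < A := by positivity
  have hCst : (0:ℝ) ≤ τ * φ₀ * Fv^2 * Real.exp (2 * τ * α₀) := by positivity
  have heq : ∀ s : ℝ,
      τ * carlPhi lam (psiWeight ψt N K) ℓ (t, Fin.snoc x' s) * Fv ^ 2 *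
          Real.exp (2 * τ * carlAlpha lam S (psiWeight ψt N K) ℓ (t, Fin.snoc x' s))
      = (τ * φ₀ * Fv^2 * Real.exp (2 * τ * α₀)) *
          (Real.exp (-(c*s^2)) * Real.exp (A * (Real.exp (-(c*s^2)) - 1))) := by
    intro s
    rw [hphi s, halpha s]
    rw [show 2 * τ * (α₀ + φ₀ * (Real.exp (-(lam * N * s^2)) - 1))
        = 2 * τ * α₀ + A * (Real.exp (-(c*s^2)) - 1) by rw [hA, hc]; ring,
      Real.exp_add]
    rw [hc]
    ring
  calc ∫ s in Ioo (0:ℝ) ε,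
        τ * carlPhi lam (psiWeight ψt N K) ℓ (t, Fin.snoc x' s) * Fv ^ 2 *
          Real.exp (2 * τ * carlAlpha lam S (psiWeight ψt N K) ℓ (t, Fin.snoc x' s))
      = (τ * φ₀ * Fv^2 * Real.exp (2 * τ * α₀)) *
          ∫ s in Ioo (0:ℝ) ε, Real.exp (-(c*s^2)) * Real.exp (A * (Real.exp (-(c*s^2)) - 1)) := by
        rw [← MeasureTheory.integral_const_mul]
        exact setIntegral_congr_fun measurableSet_Ioo (fun s _ => heq s)
    _ ≤ (τ * φ₀ * Fv^2 * Real.exp (2 * τ * α₀)) * (Real.sqrt Real.pi / (2 * Real.sqrt (A*c))) :=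
        mul_le_mul_of_nonneg_left (core_gauss A c ε hApos hcpos hε) hCst
    _ = Real.sqrt Real.pi / (2 * Real.sqrt (2 * N)) * (Real.sqrt lam)⁻¹ *
        (Real.sqrt (τ * carlPhi lam (psiWeight ψt N K) ℓ (t, Fin.snoc x' 0)) * Fv ^ 2 *
          Real.exp (2 * τ * carlAlpha lam S (psiWeight ψt N K) ℓ (t, Fin.snoc x' 0))) := by
        rw [hphi0, halpha0]
        have h1 : Real.sqrt (A*c) = Real.sqrt (2*N) * Real.sqrt lam * Real.sqrt (τ * φ₀) := by
          rw [show A * c = (2*N) * (lam * (τ * φ₀)) by rw [hA, hc]; ring]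
          rw [Real.sqrt_mul (by positivity : (0:ℝ) ≤ 2*N) (lam * (τ * φ₀)),
            Real.sqrt_mul hlam.le (τ * φ₀)]
          ring
        have h2 : τ * φ₀ = Real.sqrt (τ * φ₀) * Real.sqrt (τ * φ₀) :=
          (Real.mul_self_sqrt (by positivity)).symm
        rw [h1]
        rw [show τ * φ₀ * Fv ^ 2 * Real.exp (2 * τ * α₀) *
            (Real.sqrt Real.pi / (2 * (Real.sqrt (2*N) * Real.sqrt lam * Real.sqrt (τ * φ₀))))
          = (τ * φ₀ / Real.sqrt (τ * φ₀)) * Fv ^ 2 * Real.exp (2 * τ * α₀) *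
            (Real.sqrt Real.pi / (2 * (Real.sqrt (2*N) * Real.sqrt lam))) by ring]
        rw [Real.div_sqrt]
        ring

lemma inner_bound' {m : ℕ} (N K S τ lam ε : ℝ) (hN : 0 < N) (hτ : 0 < τ) (hlam : 0 < lam)
    (hε : 0 < ε) (ψt : (Fin m → ℝ) → ℝ) (ℓ : ℝ → ℝ) (t : ℝ) (hℓt : 0 < ℓ t)
    (x' : Fin m → ℝ) (Fv : ℝ) :
    ∫⁻ s in Ioo (0:ℝ) ε, ENNReal.ofReal
        (τ * carlPhi lam (psiWeight ψt N K) ℓ (t, Fin.snoc x' s) * Fv ^ 2 *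
          Real.exp (2 * τ * carlAlpha lam S (psiWeight ψt N K) ℓ (t, Fin.snoc x' s)))
      ≤ ENNReal.ofReal (Real.sqrt Real.pi / (2 * Real.sqrt (2 * N)) * (Real.sqrt lam)⁻¹ *
        (Real.sqrt (τ * carlPhi lam (psiWeight ψt N K) ℓ (t, Fin.snoc x' 0)) * Fv ^ 2 *
          Real.exp (2 * τ * carlAlpha lam S (psiWeight ψt N K) ℓ (t, Fin.snoc x' 0)))) := by
  have hsnoc : ∀ s : ℝ, psiWeight ψt N K (Fin.snoc x' s) = ψt x' - N * s^2 + K := by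
    intro s
    simp [psiWeight, Fin.snoc_last, Fin.snoc_castSucc]
  have hnn : ∀ s : ℝ, 0 ≤ τ * carlPhi lam (psiWeight ψt N K) ℓ (t, Fin.snoc x' s) * Fv ^ 2 *
      Real.exp (2 * τ * carlAlpha lam S (psiWeight ψt N K) ℓ (t, Fin.snoc x' s)) := by
    intro s
    have h1 : (0:ℝ) ≤ carlPhi lam (psiWeight ψt N K) ℓ (t, Fin.snoc x' s) :=
      div_nonneg (Real.exp_pos _).le hℓt.le
    exact mul_nonneg (mul_nonneg (mul_nonneg hτ.le h1) (sq_nonneg _)) (Real.exp_pos _).le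
  have hintg : IntegrableOn (fun s : ℝ =>
      τ * carlPhi lam (psiWeight ψt N K) ℓ (t, Fin.snoc x' s) * Fv ^ 2 *
        Real.exp (2 * τ * carlAlpha lam S (psiWeight ψt N K) ℓ (t, Fin.snoc x' s)))
      (Ioo 0 ε) := by
    have heq : (fun s : ℝ =>
        τ * carlPhi lam (psiWeight ψt N K) ℓ (t, Fin.snoc x' s) * Fv ^ 2 *
          Real.exp (2 * τ * carlAlpha lam S (psiWeight ψt N K) ℓ (t, Fin.snoc x' s)))
        = fun s : ℝ => τ * (Real.exp (lam * (ψt x' - N * s^2 + K)) / ℓ t) * Fv ^ 2 *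
            Real.exp (2 * τ * ((Real.exp (lam * (ψt x' - N * s^2 + K))
              - Real.exp (2 * lam * S)) / ℓ t)) := by
      funext s
      simp only [carlPhi, carlAlpha, hsnoc]
    rw [heq]
    apply IntegrableOn.mono_set (t := Icc 0 ε) _ Ioo_subset_Icc_self
    apply ContinuousOn.integrableOn_Icc
    apply Continuous.continuousOn
    fun_prop
  rw [← MeasureTheory.ofReal_integral_eq_lintegral_ofReal hintg (ae_of_all _ hnn)]
  exact ENNReal.ofReal_le_ofReal
    (inner_bound N K S τ lam ε hN hτ hlam hε ψt ℓ t hℓt x' Fv)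

/-- Fubini–Gaussian reduction of a weighted volume integral to a boundary
integral (inequality (okorok1) of the paper, with explicit constant). -/
theorem fubini_gaussian_reduction {m : ℕ}
    (O : Set (Fin m → ℝ)) (hObd : Bornology.IsBounded O) (hOmeas : MeasurableSet O)
    (ε T N K : ℝ) (hε : 0 < ε) (hT : 0 < T) (hN : 0 < N) (hK : 0 < K)
    (ψt : (Fin m → ℝ) → ℝ) (hψtm : Measurable ψt)
    (hψtbd : ∃ C : ℝ, ∀ x' ∈ O, |ψt x'| ≤ C)
    (ℓ : ℝ → ℝ) (hℓm : Measurable ℓ) (hℓpos : ∀ t ∈ Set.Ioo 0 T, 0 < ℓ t)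
    (S : ℝ) (hS : ∀ x ∈ closure (slab O ε), |psiWeight ψt N K x| ≤ S)
    (τ lam : ℝ) (hτ : 0 < τ) (hlam : 0 < lam)
    (f : ℝ × (Fin m → ℝ) → ℝ) (hf : Measurable f)
    (hint : IntegrableOn
      (fun q : ℝ × (Fin m → ℝ) =>
        Real.sqrt (τ * carlPhi lam (psiWeight ψt N K) ℓ (q.1, Fin.snoc q.2 0)) *
          (f q) ^ 2 *
          Real.exp (2 * τ * carlAlpha lam S (psiWeight ψt N K) ℓ (q.1, Fin.snoc q.2 0)))
      (Set.Ioo 0 T ×ˢ O)) :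
    (∫ p in Set.Ioo 0 T ×ˢ slab O ε,
        τ * carlPhi lam (psiWeight ψt N K) ℓ p *
          (f (p.1, fun i : Fin m => p.2 i.castSucc)) ^ 2 *
          Real.exp (2 * τ * carlAlpha lam S (psiWeight ψt N K) ℓ p))
      ≤ (Real.sqrt Real.pi / (2 * Real.sqrt (2 * N))) * (Real.sqrt lam)⁻¹ *
        ∫ q in Set.Ioo 0 T ×ˢ O,
          Real.sqrt (τ * carlPhi lam (psiWeight ψt N K) ℓ (q.1, Fin.snoc q.2 0)) *
            (f q) ^ 2 *
            Real.exp (2 * τ * carlAlpha lam S (psiWeight ψt N K) ℓ (q.1, Fin.snoc q.2 0)) := by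
  classical
  set ψ := psiWeight ψt N K with hψdef
  set C : ℝ := Real.sqrt Real.pi / (2 * Real.sqrt (2 * N)) * (Real.sqrt lam)⁻¹ with hCdef
  set g : ℝ × (Fin (m+1) → ℝ) → ℝ := fun p =>
    τ * carlPhi lam ψ ℓ p * (f (p.1, fun i : Fin m => p.2 i.castSucc)) ^ 2 *
      Real.exp (2 * τ * carlAlpha lam S ψ ℓ p) with hgdef
  set h : ℝ × (Fin m → ℝ) → ℝ := fun q =>
    Real.sqrt (τ * carlPhi lam ψ ℓ (q.1, Fin.snoc q.2 0)) * (f q) ^ 2 *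
      Real.exp (2 * τ * carlAlpha lam S ψ ℓ (q.1, Fin.snoc q.2 0)) with hhdef
  -- measurability
  have hψm : Measurable ψ :=
    ((hψtm.comp (measurable_pi_lambda _ fun i => measurable_pi_apply _)).sub
      (by fun_prop : Measurable fun x : Fin (m+1) → ℝ => N * x (Fin.last m) ^ 2)).add_const K
  have hφm : Measurable (carlPhi lam ψ ℓ) :=
    (Real.measurable_exp.comp ((hψm.comp measurable_snd).const_mul lam)).div
      (hℓm.comp measurable_fst)
  have hαm : Measurable (carlAlpha lam S ψ ℓ) :=
    ((Real.measurable_exp.comp ((hψm.comp measurable_snd).const_mul lam)).sub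
      measurable_const).div (hℓm.comp measurable_fst)
  have hprojm : Measurable (fun p : ℝ × (Fin (m+1) → ℝ) =>
      (p.1, fun i : Fin m => p.2 i.castSucc)) :=
    measurable_fst.prodMk (measurable_pi_lambda _ fun i =>
      (measurable_pi_apply _).comp measurable_snd)
  have hsnocm : Measurable (fun q : ℝ × (Fin m → ℝ) => (Fin.snoc q.2 (0:ℝ) : Fin (m+1) → ℝ)) := by
    refine measurable_pi_lambda _ fun i => ?_
    refine Fin.lastCases ?_ ?_ i
    · simp only [Fin.snoc_last]; exact measurable_const
    · intro j; simp only [Fin.snoc_castSucc]; exact (measurable_pi_apply j).comp measurable_snd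
  have hqmapm : Measurable (fun q : ℝ × (Fin m → ℝ) => (q.1, (Fin.snoc q.2 (0:ℝ) : Fin (m+1) → ℝ))) :=
    measurable_fst.prodMk hsnocm
  have hgm : Measurable g :=
    ((hφm.const_mul τ).mul ((hf.comp hprojm).pow_const 2)).mul
      (Real.measurable_exp.comp (hαm.const_mul (2*τ)))
  have hhm : Measurable h :=
    ((((hφm.comp hqmapm).const_mul τ).sqrt).mul (hf.pow_const 2)).mul
      (Real.measurable_exp.comp ((hαm.comp hqmapm).const_mul (2*τ)))
  -- the slab is measurable
  have hslabmeas : MeasurableSet (slab O ε) := by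
    have hsm : slab O ε = (fun x : Fin (m+1) → ℝ =>
        ((fun i : Fin m => x i.castSucc), x (Fin.last m))) ⁻¹' (O ×ˢ Ioo 0 ε) := rfl
    rw [hsm]
    exact ((measurable_pi_lambda _ fun i => measurable_pi_apply _).prodMk
      (measurable_pi_apply _)) (hOmeas.prod measurableSet_Ioo)
  have hDmeas : MeasurableSet (Ioo 0 T ×ˢ slab O ε) := measurableSet_Ioo.prod hslabmeas
  have hEmeas : MeasurableSet (Ioo 0 T ×ˢ O) := measurableSet_Ioo.prod hOmeas
  -- nonnegativity
  have hgnn : ∀ p ∈ Ioo 0 T ×ˢ slab O ε, 0 ≤ g p := by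
    rintro ⟨t, x⟩ ⟨ht, _⟩
    have h1 : (0:ℝ) ≤ carlPhi lam ψ ℓ (t, x) :=
      div_nonneg (Real.exp_pos _).le (hℓpos t ht).le
    exact mul_nonneg (mul_nonneg (mul_nonneg hτ.le h1) (sq_nonneg _)) (Real.exp_pos _).le
  have hhnn : ∀ q, 0 ≤ h q := fun q =>
    mul_nonneg (mul_nonneg (Real.sqrt_nonneg _) (sq_nonneg _)) (Real.exp_pos _).le
  have hCnn : (0:ℝ) ≤ C := by rw [hCdef]; positivity
  have hEhnn : (0:ℝ) ≤ ∫ q in Ioo 0 T ×ˢ O, h q :=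
    setIntegral_nonneg hEmeas fun q _ => hhnn q
  -- the equivalence
  set e := MeasurableEquiv.piFinSuccAbove (fun _ : Fin (m+1) => ℝ) (Fin.last m) with hedef
  have hesymm : ∀ (s : ℝ) (x' : Fin m → ℝ), e.symm (s, x') = Fin.snoc x' s := by
    intro s x'
    simp [hedef, MeasurableEquiv.piFinSuccAbove, Fin.insertNth_last', Fin.snocEquiv]
  have hmp : MeasurePreserving e.symm volume volume :=
    (volume_preserving_piFinSuccAbove (fun _ : Fin (m+1) => ℝ) (Fin.last m)).symm
  have hslabimg : e.symm '' (Ioo 0 ε ×ˢ O) = slab O ε := by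
    ext x
    constructor
    · rintro ⟨⟨s, x'⟩, hy, rfl⟩
      rw [hesymm]
      refine ⟨?_, ?_⟩
      · simpa [Fin.snoc_castSucc] using hy.2
      · simpa [Fin.snoc_last] using hy.1
    · intro hx
      refine ⟨(x (Fin.last m), Fin.init x), ⟨hx.2, hx.1⟩, ?_⟩
      rw [hesymm]
      exact Fin.snoc_init_self x
  -- main lintegral chain
  have key : ∫⁻ p in Ioo 0 T ×ˢ slab O ε, ENNReal.ofReal (g p)
      ≤ ENNReal.ofReal (C * ∫ q in Ioo 0 T ×ˢ O, h q) := by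
    have hGm : Measurable fun p : ℝ × (Fin (m+1) → ℝ) => ENNReal.ofReal (g p) :=
      hgm.ennreal_ofReal
    calc ∫⁻ p in Ioo 0 T ×ˢ slab O ε, ENNReal.ofReal (g p)
        = ∫⁻ t in Ioo 0 T, ∫⁻ x in slab O ε, ENNReal.ofReal (g (t, x)) := by
          rw [Measure.volume_eq_prod, ← Measure.prod_restrict,
            MeasureTheory.lintegral_prod _ hGm.aemeasurable]
      _ ≤ ∫⁻ t in Ioo 0 T, ENNReal.ofReal C * ∫⁻ x' in O, ENNReal.ofReal (h (t, x')) := by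
          apply setLIntegral_mono' measurableSet_Ioo
          intro t ht
          have hℓt := hℓpos t ht
          have h2 : ∫⁻ x in slab O ε, ENNReal.ofReal (g (t, x))
              = ∫⁻ y in Ioo 0 ε ×ˢ O, ENNReal.ofReal (g (t, e.symm y)) := by
            rw [← hslabimg,
              ← MeasurePreserving.setLIntegral_comp_emb hmp e.symm.measurableEmbedding
                (fun x => ENNReal.ofReal (g (t, x))) (Ioo 0 ε ×ˢ O)]
          rw [h2]
          have hGm2 : Measurable fun y : ℝ × (Fin m → ℝ) => ENNReal.ofReal (g (t, e.symm y)) :=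
            (hgm.comp (measurable_const.prodMk e.symm.measurable)).ennreal_ofReal
          rw [Measure.volume_eq_prod, ← Measure.prod_restrict,
            MeasureTheory.lintegral_prod_symm _ hGm2.aemeasurable]
          calc ∫⁻ x' in O, ∫⁻ s in Ioo 0 ε, ENNReal.ofReal (g (t, e.symm (s, x')))
              ≤ ∫⁻ x' in O, ENNReal.ofReal (C * h (t, x')) := by
                apply setLIntegral_mono' hOmeas
                intro x' _
                have h3 : ∀ s : ℝ, g (t, e.symm (s, x'))
                    = τ * carlPhi lam ψ ℓ (t, Fin.snoc x' s) * (f (t, x')) ^ 2 *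
                      Real.exp (2 * τ * carlAlpha lam S ψ ℓ (t, Fin.snoc x' s)) := by
                  intro s
                  rw [hesymm, hgdef]
                  simp only [Fin.snoc_castSucc]
                have h4 : C * h (t, x')
                    = C * (Real.sqrt (τ * carlPhi lam ψ ℓ (t, Fin.snoc x' 0)) * (f (t, x')) ^ 2 *
                      Real.exp (2 * τ * carlAlpha lam S ψ ℓ (t, Fin.snoc x' 0))) := rfl
                rw [h4]
                simp only [h3]
                exact inner_bound' N K S τ lam ε hN hτ hlam hε ψt ℓ t hℓt x' (f (t, x'))
            _ = ENNReal.ofReal C * ∫⁻ x' in O, ENNReal.ofReal (h (t, x')) := by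
                simp_rw [ENNReal.ofReal_mul hCnn]
                rw [lintegral_const_mul' _ _ ENNReal.ofReal_ne_top]
      _ = ENNReal.ofReal C * ∫⁻ t in Ioo 0 T, ∫⁻ x' in O, ENNReal.ofReal (h (t, x')) := by
          rw [lintegral_const_mul' _ _ ENNReal.ofReal_ne_top]
      _ = ENNReal.ofReal C * ∫⁻ q in Ioo 0 T ×ˢ O, ENNReal.ofReal (h q) := by
          rw [Measure.volume_eq_prod, ← Measure.prod_restrict,
            MeasureTheory.lintegral_prod _ hhm.ennreal_ofReal.aemeasurable]
      _ = ENNReal.ofReal C * ENNReal.ofReal (∫ q in Ioo 0 T ×ˢ O, h q) := by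
          rw [← MeasureTheory.ofReal_integral_eq_lintegral_ofReal hint
            (ae_of_all _ fun q => hhnn q)]
      _ = ENNReal.ofReal (C * ∫ q in Ioo 0 T ×ˢ O, h q) := (ENNReal.ofReal_mul hCnn).symm
  -- convert back to Bochner integral
  have hL : ∫ p in Ioo 0 T ×ˢ slab O ε, g p
      = (∫⁻ p in Ioo 0 T ×ˢ slab O ε, ENNReal.ofReal (g p)).toReal := by
    rw [MeasureTheory.integral_eq_lintegral_of_nonneg_ae
      (ae_restrict_of_forall_mem hDmeas hgnn) hgm.aestronglyMeasurable.restrict]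
  calc ∫ p in Ioo 0 T ×ˢ slab O ε, g p
      = (∫⁻ p in Ioo 0 T ×ˢ slab O ε, ENNReal.ofReal (g p)).toReal := hL
    _ ≤ (ENNReal.ofReal (C * ∫ q in Ioo 0 T ×ˢ O, h q)).toReal :=
        ENNReal.toReal_mono ENNReal.ofReal_ne_top key
    _ = C * ∫ q in Ioo 0 T ×ˢ O, h q :=
        ENNReal.toReal_ofReal (mul_nonneg hCnn hEhnn)
end
end
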